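/- Let n ≥ 1 be a natural number and let z be a real number with |z| < tan(π/(2n)). Then the matrix I_n − z·B_n is invertible and z · Tr(J_n · (I_n − z·B_n)^{−1}) = tan(n · arctan z). -/

import Mathlib

/-- `J n` is the `n × n` complex matrix all of whose entries equal `1`. -/
def J (n : ℕ) : Matrix (Fin n) (Fin n) ℂ := Matrix.of fun _ _ => 1

/-- `B n` is the `n × n` complex matrix with entries `i` above the diagonal,
`-i` below the diagonal and `0` on the diagonal. -/
def B (n : ℕ) : Matrix (Fin n) (Fin n) ℂ :=
  Matrix.of fun j k => if j < k then Complex.I else if k < j then -Complex.I else 0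

private lemma rowSum (c : ℂ) (v : ℕ → ℂ) {j n : ℕ} (hj : j < n) :
    ∑ k ∈ Finset.range n, (if j < k then -c else if k < j then c else 1) * v k
      = v j + c * (∑ k ∈ Finset.range j, v k)
        - c * ((∑ k ∈ Finset.range n, v k) - ∑ k ∈ Finset.range (j+1), v k) := by
  have hsplit := Finset.sum_range_add_sum_Ico
    (fun k => (if j < k then -c else if k < j then c else 1) * v k) (Nat.succ_le_of_lt hj)
  rw [← hsplit, Finset.sum_range_succ]
  have h1 : ∀ k ∈ Finset.range j, (if j < k then -c else if k < j then c else 1) * v k = c * v k := by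
    intro k hk; rw [Finset.mem_range] at hk; rw [if_neg (by omega), if_pos hk]
  have h2 : ∀ k ∈ Finset.Ico (j+1) n, (if j < k then -c else if k < j then c else 1) * v k = -c * v k := by
    intro k hk; rw [Finset.mem_Ico] at hk; rw [if_pos (by omega)]
  rw [Finset.sum_congr rfl h1, Finset.sum_congr rfl h2, if_neg (lt_irrefl j), if_neg (lt_irrefl j),
    ← Finset.mul_sum, ← Finset.mul_sum, Finset.sum_Ico_eq_sub _ (Nat.succ_le_of_lt hj)]
  ring

theorem stmt_9 (n : ℕ) (hn : 1 ≤ n) (z : ℝ) (hz : |z| < Real.tan (Real.pi / (2 * n))) :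
    IsUnit ((1 : Matrix (Fin n) (Fin n) ℂ) - (z : ℂ) • B n) ∧
    (z : ℂ) * Matrix.trace (J n * ((1 : Matrix (Fin n) (Fin n) ℂ) - (z : ℂ) • B n)⁻¹) =
      (Real.tan (n * Real.arctan z) : ℂ) := by
  by_cases hz0 : z = 0
  · subst hz0
    constructor
    · simp
    · simp [Real.arctan_zero]
  -- Main case z ≠ 0.
  obtain ⟨m, rfl⟩ : ∃ m, n = m + 1 := ⟨n - 1, (Nat.succ_pred_eq_of_pos hn).symm⟩
  set n := m + 1 with hndef
  set M : Matrix (Fin n) (Fin n) ℂ := (1 : Matrix (Fin n) (Fin n) ℂ) - (z : ℂ) • B n with hMdef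
  have hz2 : (z : ℂ) ≠ 0 := by exact_mod_cast hz0
  set c : ℂ := Complex.I * z with hcdef
  have hc : c ≠ 0 := mul_ne_zero Complex.I_ne_zero hz2
  set a : ℂ := 1 - Complex.I * z with hadef
  set b : ℂ := 1 + Complex.I * z with hbdef
  have hb : b ≠ 0 := by
    intro h
    have := congrArg Complex.re h
    simp [hbdef, Complex.add_re, Complex.mul_re] at this
  have ha : a ≠ 0 := by
    intro h
    have := congrArg Complex.re h
    simp [hadef, Complex.sub_re, Complex.mul_re] at this
  -- The angle θ and its bound.
  set θ := Real.arctan z with hθdef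
  have hθabs : |(n : ℝ) * θ| < Real.pi / 2 := by
    rcases eq_or_lt_of_le hn with h1 | h2
    · exfalso
      rw [← h1] at hz
      norm_num [Real.tan_pi_div_two] at hz
      exact absurd hz (not_lt.mpr (abs_nonneg z))
    · have hnpos : (0:ℝ) < n := by positivity
      have hpi : (0:ℝ) < Real.pi := Real.pi_pos
      have hlt : Real.pi / (2 * n) < Real.pi / 2 := by
        apply div_lt_div_of_pos_left hpi (by norm_num)
        have : (2:ℝ) ≤ n := by exact_mod_cast h2
        nlinarith
      have hgt : 0 < Real.pi / (2 * n) := by positivity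
      have harctan : Real.arctan |z| < Real.pi / (2 * n) := by
        calc Real.arctan |z| < Real.arctan (Real.tan (Real.pi / (2 * n))) :=
              Real.arctan_strictMono hz
          _ = Real.pi / (2 * n) := Real.arctan_tan (by linarith) hlt
      have habs : |θ| = Real.arctan |z| := by
        rcases le_or_gt 0 z with hle | hlt'
        · rw [abs_of_nonneg hle, abs_of_nonneg (by
            rw [hθdef, ← Real.arctan_zero]
            exact Real.arctan_strictMono.monotone hle)]
        · have hθneg : θ < 0 := by
            rw [hθdef, ← Real.arctan_zero]
            exact Real.arctan_strictMono hlt'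
          rw [abs_of_neg hlt', abs_of_neg hθneg, hθdef, Real.arctan_neg]
      rw [abs_mul, abs_of_pos hnpos, habs]
      calc (n:ℝ) * Real.arctan |z| < n * (Real.pi / (2 * n)) :=
            mul_lt_mul_of_pos_left harctan hnpos
        _ = Real.pi / 2 := by field_simp
  have hcosθ : Real.cos θ ≠ 0 := (Real.cos_arctan_pos z).ne'
  have hcosn : Real.cos ((n:ℝ) * θ) ≠ 0 :=
    (Real.cos_pos_of_mem_Ioo (Set.mem_Ioo.mpr (abs_lt.mp hθabs))).ne'
  have hztan : z = Real.tan θ := (Real.tan_arctan z).symm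
  have hzc : (z : ℂ) * (Real.cos θ : ℂ) = (Real.sin θ : ℂ) := by
    rw [← Complex.ofReal_mul, hztan]
    norm_cast
    rw [Real.tan_eq_sin_div_cos]
    field_simp
  -- exponential identities
  have hbexp : b * (Real.cos θ : ℂ) = Complex.exp (θ * Complex.I) := by
    rw [Complex.exp_mul_I, hbdef, ← Complex.ofReal_cos, ← Complex.ofReal_sin]
    linear_combination Complex.I * hzc
  have haexp : a * (Real.cos θ : ℂ) = Complex.exp (-(θ * Complex.I)) := by
    have h : -((θ:ℂ) * Complex.I) = (-(θ:ℂ)) * Complex.I := by ring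
    rw [h, Complex.exp_mul_I, Complex.cos_neg, Complex.sin_neg, hadef,
      ← Complex.ofReal_cos, ← Complex.ofReal_sin]
    linear_combination -Complex.I * hzc
  have hE1 : b ^ n * (Real.cos θ : ℂ) ^ n
      = (Real.cos ((n:ℝ) * θ) : ℂ) + (Real.sin ((n:ℝ) * θ) : ℂ) * Complex.I := by
    calc b ^ n * (Real.cos θ : ℂ) ^ n = (b * (Real.cos θ : ℂ)) ^ n := (mul_pow _ _ _).symm
      _ = Complex.exp ((θ:ℂ) * Complex.I) ^ n := by rw [hbexp]
      _ = Complex.exp ((n:ℂ) * ((θ:ℂ) * Complex.I)) := (Complex.exp_nat_mul _ n).symm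
      _ = Complex.exp ((((n:ℝ) * θ : ℝ) : ℂ) * Complex.I) := by congr 1; push_cast; ring
      _ = (Real.cos ((n:ℝ) * θ) : ℂ) + (Real.sin ((n:ℝ) * θ) : ℂ) * Complex.I := by
            rw [Complex.exp_mul_I]; push_cast; ring
  have hE2 : a ^ n * (Real.cos θ : ℂ) ^ n
      = (Real.cos ((n:ℝ) * θ) : ℂ) - (Real.sin ((n:ℝ) * θ) : ℂ) * Complex.I := by
    calc a ^ n * (Real.cos θ : ℂ) ^ n = (a * (Real.cos θ : ℂ)) ^ n := (mul_pow _ _ _).symm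
      _ = Complex.exp (-((θ:ℂ) * Complex.I)) ^ n := by rw [haexp]
      _ = Complex.exp ((n:ℂ) * -((θ:ℂ) * Complex.I)) := (Complex.exp_nat_mul _ n).symm
      _ = Complex.exp ((-((((n:ℝ) * θ : ℝ)) : ℂ)) * Complex.I) := by congr 1; push_cast; ring
      _ = (Real.cos ((n:ℝ) * θ) : ℂ) - (Real.sin ((n:ℝ) * θ) : ℂ) * Complex.I := by
            rw [Complex.exp_mul_I, Complex.cos_neg, Complex.sin_neg]; push_cast; ring
  have hcospow : ((Real.cos θ : ℂ)) ^ n ≠ 0 :=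
    pow_ne_zero n (by exact_mod_cast hcosθ)
  have hD : a ^ n + b ^ n ≠ 0 := by
    intro h
    have h2 : (a ^ n + b ^ n) * (Real.cos θ : ℂ) ^ n = 2 * (Real.cos ((n:ℝ) * θ) : ℂ) := by
      rw [add_mul, hE1, hE2]; ring
    rw [h, zero_mul] at h2
    have h3 : (Real.cos ((n:ℝ) * θ) : ℂ) = 0 := by linear_combination -h2 / 2
    exact hcosn (by exact_mod_cast h3)
  -- tan identity
  have hT : (Real.tan ((n:ℝ) * θ) : ℂ) * (Complex.I * (a ^ n + b ^ n)) = b ^ n - a ^ n := by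
    apply mul_right_cancel₀ hcospow
    have htc : (Real.tan ((n:ℝ) * θ) : ℂ) * (Real.cos ((n:ℝ) * θ) : ℂ)
        = (Real.sin ((n:ℝ) * θ) : ℂ) := by
      rw [← Complex.ofReal_mul]
      norm_cast
      rw [Real.tan_eq_sin_div_cos]
      field_simp
    linear_combination ((Real.tan ((n:ℝ) * θ) : ℂ) * Complex.I - 1) * hE1
      + ((Real.tan ((n:ℝ) * θ) : ℂ) * Complex.I + 1) * hE2 + 2 * Complex.I * htc
  -- matrix entries
  have hMent : ∀ j k : Fin n, M j k
      = if (j:ℕ) < (k:ℕ) then -c else if (k:ℕ) < (j:ℕ) then c else 1 := by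
    intro j k
    rcases lt_trichotomy (j:ℕ) (k:ℕ) with h | h | h
    · have hjk : j < k := h
      have hne : j ≠ k := ne_of_lt hjk
      simp [hMdef, B, Matrix.sub_apply, Matrix.one_apply, hjk, hne, h,
        not_lt_of_gt hjk, hcdef]
      ring
    · have he : j = k := Fin.ext h
      simp [hMdef, B, Matrix.sub_apply, Matrix.one_apply, he, lt_irrefl]
    · have hkj : k < j := h
      have hne : j ≠ k := (ne_of_lt hkj).symm
      simp [hMdef, B, Matrix.sub_apply, Matrix.one_apply, hkj, hne, h,
        not_lt_of_gt hkj, not_lt_of_gt h, hcdef]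
      ring
  -- mulVec formula
  have hmulVec : ∀ (w : ℕ → ℂ) (j : Fin n), M.mulVec (fun k : Fin n => w (k:ℕ)) j
      = w (j:ℕ) + c * (∑ k ∈ Finset.range (j:ℕ), w k)
        - c * ((∑ k ∈ Finset.range n, w k) - ∑ k ∈ Finset.range ((j:ℕ)+1), w k) := by
    intro w j
    have h : M.mulVec (fun k : Fin n => w (k:ℕ)) j
        = ∑ k ∈ Finset.range n, (if (j:ℕ) < k then -c else if k < (j:ℕ) then c else 1) * w k := by
      simp only [Matrix.mulVec, dotProduct]
      rw [← Fin.sum_univ_eq_sum_range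
        (fun k => (if (j:ℕ) < k then -c else if k < (j:ℕ) then c else 1) * w k) n]
      exact Finset.sum_congr rfl fun k _ => by rw [hMent j k]
    rw [h, rowSum c w j.isLt]
  -- kernel is trivial
  have hker : ∀ v : Fin n → ℂ, M.mulVec v = 0 → v = 0 := by
    intro v hv
    set w : ℕ → ℂ := fun k => if h : k < n then v ⟨k, h⟩ else 0 with hwdef
    have hvw : (fun k : Fin n => w (k:ℕ)) = v := by
      funext k; simp [hwdef, k.isLt]
    set P : ℕ → ℂ := fun j => ∑ k ∈ Finset.range j, w k with hPdef
    set S : ℂ := P n with hSdef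
    have hrow : ∀ j : ℕ, j < n → b * w j = c * S - 2 * c * P j := by
      intro j hj
      have h0 := hmulVec w ⟨j, hj⟩
      rw [hvw, hv] at h0
      simp only [Pi.zero_apply] at h0
      have h0' : w j + c * (∑ k ∈ Finset.range j, w k)
          - c * ((∑ k ∈ Finset.range n, w k) - ∑ k ∈ Finset.range (j+1), w k) = 0 := by
        simpa using h0.symm
      have hsum : (∑ k ∈ Finset.range (j+1), w k) = (∑ k ∈ Finset.range j, w k) + w j :=
        Finset.sum_range_succ w j
      have hb1c : b = 1 + c := by rw [hbdef, hcdef]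
      have hS' : S = ∑ k ∈ Finset.range n, w k := rfl
      have hP' : P j = ∑ k ∈ Finset.range j, w k := rfl
      rw [hS', hP']
      linear_combination h0' + w j * hb1c - c * hsum
    have hPind : ∀ j, j ≤ n → 2 * b ^ j * P j = S * (b ^ j - a ^ j) := by
      intro j
      induction j with
      | zero => intro _; simp [hPdef]
      | succ j ih =>
        intro hj
        have hj' : j < n := by omega
        have h1 := ih (by omega)
        have h2 := hrow j hj'
        have hPs : P (j+1) = P j + w j := Finset.sum_range_succ w j
        have hab : b - 2 * c = a := by rw [hadef, hbdef, hcdef]; ring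
        rw [hPs, pow_succ, pow_succ]
        linear_combination b * h1 + 2 * (b ^ j) * h2 - 2 * c * h1 + S * (a ^ j) * hab
    have hS0 : S = 0 := by
      have h1 := hPind n le_rfl
      rw [← hSdef] at h1
      have h2 : S * (b ^ n + a ^ n) = 0 := by linear_combination h1
      rcases mul_eq_zero.mp h2 with h | h
      · exact h
      · exact absurd (by linear_combination h) hD
    have hP0 : ∀ j, j ≤ n → P j = 0 := by
      intro j hj
      have h1 := hPind j hj
      rw [hS0, zero_mul] at h1
      have h2 : (2 : ℂ) * b ^ j ≠ 0 := mul_ne_zero two_ne_zero (pow_ne_zero _ hb)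
      by_contra hne
      exact (mul_ne_zero h2 hne) h1
    have hw0 : ∀ j, j < n → w j = 0 := by
      intro j hj
      have h1 := hrow j hj
      rw [hS0, hP0 j (le_of_lt hj)] at h1
      have h3 : b * w j = 0 := by rw [h1]; ring
      exact (mul_eq_zero.mp h3).resolve_left hb
    funext k
    have hk := hw0 (k:ℕ) k.isLt
    rw [← hvw]
    simpa using hk
  have hdet : M.det ≠ 0 := by
    intro h
    obtain ⟨v, hv0, hveq⟩ := (Matrix.exists_mulVec_eq_zero_iff).mpr h
    exact hv0 (hker v hveq)
  have hunit : IsUnit M := (Matrix.isUnit_iff_isUnit_det M).mpr (Ne.isUnit hdet)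
  refine ⟨hunit, ?_⟩
  -- trace computation
  set r : ℂ := a / b with hrdef
  have hr1 : r ≠ 1 := by
    intro h
    rw [hrdef, div_eq_one_iff_eq hb] at h
    rw [hadef, hbdef] at h
    have h2 : (2 : ℂ) * (Complex.I * z) = 0 := by linear_combination -h
    simp [Complex.I_ne_zero] at h2
    exact hz0 h2
  have hr1' : r - 1 ≠ 0 := sub_ne_zero.mpr hr1
  set cc : ℂ := (a ^ n + b ^ n) / (2 * b ^ m) with hccdef
  have hcc : cc ≠ 0 :=
    div_ne_zero hD (mul_ne_zero two_ne_zero (pow_ne_zero _ hb))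
  have hbr : b * r = a := by rw [hrdef]; field_simp
  have hrn : b ^ n * r ^ n = a ^ n := by rw [← mul_pow, hbr]
  have hbn : b ^ m * b = b ^ n := (pow_succ b m).symm
  have hb1c : b = 1 + c := by rw [hbdef, hcdef]
  have ha1c : a = 1 - c := by rw [hadef, hcdef]
  have hba : a - b = -(2*c) := by rw [hadef, hbdef, hcdef]; ring
  have h2bm : (2:ℂ) * b ^ m ≠ 0 := mul_ne_zero two_ne_zero (pow_ne_zero _ hb)
  have hcc2 : cc * (2 * b ^ m) = a ^ n + b ^ n := by
    rw [hccdef]; exact div_mul_cancel₀ _ h2bm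
  -- unfolded nonzero facts, for field_simp
  have hb2 : (1 : ℂ) + Complex.I * z ≠ 0 := by rw [← hbdef]; exact hb
  have hr2 : ((1 : ℂ) - Complex.I * z) / (1 + Complex.I * z) - 1 ≠ 0 := by
    rw [← hbdef, ← hadef, ← hrdef]; exact hr1'
  have hD2 : ((1 : ℂ) - Complex.I * z) ^ (m+1) + ((1 : ℂ) + Complex.I * z) ^ (m+1) ≠ 0 := by
    rw [← hadef, ← hbdef, ← hndef]; exact hD
  have hx : M.mulVec (fun k : Fin n => r ^ (k:ℕ)) = fun _ => cc := by
    funext j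
    rw [hmulVec (fun k => r ^ k) j]
    apply mul_right_cancel₀ (mul_ne_zero (mul_ne_zero hr1' h2bm) hb)
    have G1 := geom_sum_mul r (j:ℕ)
    have G2 := geom_sum_mul r n
    have G3 := geom_sum_mul r ((j:ℕ)+1)
    rw [pow_succ r (j:ℕ)] at G3
    linear_combination (2*b^m*b*c) * G1 - (2*b^m*b*c) * G2 + (2*b^m*b*c) * G3
      - ((r-1)*b) * hcc2
      + (2*b^m*b*(r^(j:ℕ)) - a^n - b^n) * hbr
      + (-(2*b^m*b*(r^(j:ℕ))*r) + a^n + b^n) * hb1c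
      + (2*b^m*b*(r^(j:ℕ)) - a^n - b^n) * ha1c
      + (-(2*c) - 2*c*(r^n)) * hbn
      + (-(2*c)) * hrn
  have hNM : M⁻¹ * M = 1 := Matrix.nonsing_inv_mul M (Ne.isUnit hdet)
  have hinv : M⁻¹.mulVec (fun _ => cc) = fun k : Fin n => r ^ (k:ℕ) := by
    rw [← hx, Matrix.mulVec_mulVec, hNM, Matrix.one_mulVec]
  have hrowsum : ∀ j : Fin n, (∑ k : Fin n, M⁻¹ j k) * cc = r ^ (j:ℕ) := by
    intro j
    have h1 := congrFun hinv j
    simp only [Matrix.mulVec, dotProduct] at h1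
    rw [← h1, Finset.sum_mul]
  have htr : Matrix.trace (J n * M⁻¹) * cc = ∑ j : Fin n, r ^ (j:ℕ) := by
    have h1 : Matrix.trace (J n * M⁻¹) = ∑ k : Fin n, ∑ i : Fin n, M⁻¹ k i := by
      rw [Matrix.trace]
      simp only [Matrix.diag, Matrix.mul_apply, J, Matrix.of_apply, one_mul]
      rw [Finset.sum_comm]
    rw [h1, Finset.sum_mul]
    exact Finset.sum_congr rfl fun k _ => hrowsum k
  have hfin : (z:ℂ) * (∑ j : Fin n, r ^ (j:ℕ)) = (Real.tan ((n:ℝ) * θ) : ℂ) * cc := by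
    rw [Fin.sum_univ_eq_sum_range (fun k => r ^ k) n]
    apply mul_right_cancel₀ (mul_ne_zero (mul_ne_zero (mul_ne_zero hr1' h2bm)
      (mul_ne_zero Complex.I_ne_zero hD)) hb)
    have G2 := geom_sum_mul r n
    have hIz : c = Complex.I * z := hcdef
    linear_combination ((z:ℂ)*(2*b^m)*(Complex.I*(a^n+b^n))*b) * G2
      + (-(cc*(r-1)*(2*b^m)*b)) * hT
      + (-((r-1)*b*(b^n-a^n))) * hcc2
      + ((2*Complex.I*(z:ℂ)*(a^n+b^n))*(r^n-1)) * hbn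
      + (2*Complex.I*(z:ℂ)*(a^n+b^n)) * hrn
      + (-((a^n+b^n)*(b^n-a^n))) * hbr
      + ((a^n+b^n)*(a^n-b^n)) * hba
      + ((a^n+b^n)*(a^n-b^n)*2) * hIz
  apply mul_right_cancel₀ hcc
  calc (z:ℂ) * Matrix.trace (J n * M⁻¹) * cc
      = (z:ℂ) * (Matrix.trace (J n * M⁻¹) * cc) := by ring
    _ = (z:ℂ) * ∑ j : Fin n, r ^ (j:ℕ) := by rw [htr]
    _ = (Real.tan ((n:ℝ) * θ) : ℂ) * cc := hfin
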